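/- Let d ≥ 3 be odd and suppose A is a 2d×2d complex matrix of quaternion type (i.e., consisting of 2×2 blocks of the form [[a, b],[-b̄, ā]]) that is Hermitian, has purely imaginary quaternion entries (so Ā^{T₂} = -A when viewed blockwise), and satisfies A² + 2A - (d²-1)I = 0. Then U = (1/d)(I + A) is Hermitian unitary and satisfies (1/(2d))tr[U·Ū^{T₂}] = -1 + 2/d². -/

import Mathlib

open Matrix

/-- Partial transpose on the second tensor factor. -/
def ptrans2 (d₁ d₂ : ℕ) (M : Matrix (Fin d₁ × Fin d₂) (Fin d₁ × Fin d₂) ℂ) :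
    Matrix (Fin d₁ × Fin d₂) (Fin d₁ × Fin d₂) ℂ :=
  Matrix.of fun p q => M (p.1, q.2) (q.1, p.2)

/-- If `A` on `ℂ^d ⊗ ℂ²` (odd `d ≥ 3`) is of quaternion type, Hermitian, has
purely imaginary quaternion entries (`Ā^{T₂} = -A`), and satisfies `A² + 2A - (d²-1)I = 0`,
then `U = (1/d)(I + A)` is a Hermitian unitary with `(1/(2d)) tr[U Ū^{T₂}] = -1 + 2/d²`. -/
theorem stmt_18 (d : ℕ) (hd : Odd d) (hd3 : 3 ≤ d)
    (A : Matrix (Fin d × Fin 2) (Fin d × Fin 2) ℂ)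
    (hquat : ∀ p q : Fin d,
      A (p, 1) (q, 1) = starRingEnd ℂ (A (p, 0) (q, 0)) ∧
      A (p, 1) (q, 0) = -starRingEnd ℂ (A (p, 0) (q, 1)))
    (hherm : Aᴴ = A)
    (him : ptrans2 d 2 (A.map (starRingEnd ℂ)) = -A)
    (heq : A * A + (2 : ℂ) • A - ((d : ℂ) ^ 2 - 1) • (1 : Matrix (Fin d × Fin 2) (Fin d × Fin 2) ℂ) = 0)
    (U : Matrix (Fin d × Fin 2) (Fin d × Fin 2) ℂ)
    (hUdef : U = ((d : ℂ))⁻¹ • (1 + A)) :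
    Uᴴ = U ∧ U ∈ Matrix.unitaryGroup (Fin d × Fin 2) ℂ ∧
    (1 / (2 * (d : ℂ))) * (U * ptrans2 d 2 (U.map (starRingEnd ℂ))).trace
      = -1 + 2 / (d : ℂ) ^ 2 := by
  have hdne : (d : ℂ) ≠ 0 := Nat.cast_ne_zero.mpr (by omega)
  -- A * A identity
  have hA2 : A * A = ((d : ℂ) ^ 2 - 1) • (1 : Matrix (Fin d × Fin 2) (Fin d × Fin 2) ℂ)
      - (2 : ℂ) • A := by
    have h := sub_eq_zero.mp heq
    exact eq_sub_of_add_eq h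
  -- Hermitian
  have hUherm : Uᴴ = U := by
    rw [hUdef, Matrix.conjTranspose_smul, Matrix.conjTranspose_add,
      Matrix.conjTranspose_one, hherm]
    congr 1
    simp
  -- U * U = 1
  have hUU : U * U = 1 := by
    rw [hUdef, Matrix.smul_mul, Matrix.mul_smul, smul_smul]
    rw [mul_add, mul_one, add_mul, one_mul, hA2]
    have h1 : (1 : Matrix (Fin d × Fin 2) (Fin d × Fin 2) ℂ) + A +
        (A + (((d : ℂ) ^ 2 - 1) • 1 - (2 : ℂ) • A)) = ((d : ℂ) ^ 2) • 1 := by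
      module
    rw [h1, smul_smul]
    rw [show ((d : ℂ))⁻¹ * (d : ℂ)⁻¹ * (d : ℂ) ^ 2 = 1 by field_simp]
    exact one_smul _ _
  -- partial transpose of conj of U
  have hpt : ptrans2 d 2 (U.map (starRingEnd ℂ)) = ((d : ℂ))⁻¹ • (1 - A) := by
    ext p q
    have h1 := congrFun (congrFun him p) q
    simp only [ptrans2, Matrix.of_apply, Matrix.map_apply, Matrix.neg_apply] at h1
    simp only [ptrans2, Matrix.of_apply, Matrix.map_apply, hUdef, Matrix.smul_apply,
      Matrix.add_apply, Matrix.sub_apply, Matrix.one_apply]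
    have hone : ((if (p.1, q.2) = (q.1, p.2) then (1 : ℂ) else 0)) =
        (if p = q then (1 : ℂ) else 0) := by
      congr 1
      simp [Prod.ext_iff, eq_comm, and_comm]
    simp only [smul_eq_mul, _root_.map_mul, map_add, map_inv₀, Complex.conj_natCast,
      apply_ite (starRingEnd ℂ), RingHom.map_one, map_zero]
    rw [h1, hone]
    ring
  -- trace of A is zero
  have htrA : A.trace = 0 := by
    have hzero : ∀ p : Fin d × Fin 2, A p p = 0 := by
      intro p
      have h1 := congrFun (congrFun him p) p
      simp only [ptrans2, Matrix.of_apply, Matrix.map_apply, Matrix.neg_apply] at h1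
      have h2 : starRingEnd ℂ (A p p) = A p p := by
        conv_rhs => rw [← hherm]
        simp [Matrix.conjTranspose_apply]
      rw [show ((p.1, p.2) : Fin d × Fin 2) = p from rfl] at h1
      rw [h2] at h1
      linear_combination h1 / 2
    simp [Matrix.trace, Matrix.diag, hzero]
  -- compute product
  have hprod : U * ptrans2 d 2 (U.map (starRingEnd ℂ)) =
      (((d : ℂ))⁻¹ * (d : ℂ)⁻¹) • (((2 : ℂ) - (d : ℂ) ^ 2) • 1 + (2 : ℂ) • A) := by
    rw [hpt, hUdef, Matrix.smul_mul, Matrix.mul_smul, smul_smul]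
    congr 1
    rw [mul_sub, mul_one, add_mul, one_mul, hA2]
    module
  rw [hprod]
  refine ⟨hUherm, ?_, ?_⟩
  · rw [Matrix.mem_unitaryGroup_iff, Matrix.star_eq_conjTranspose, hUherm, hUU]
  · rw [Matrix.trace_smul, Matrix.trace_add, Matrix.trace_smul, Matrix.trace_smul,
      htrA, Matrix.trace_one]
    have hcard : (Fintype.card (Fin d × Fin 2) : ℂ) = 2 * d := by
      simp [Fintype.card_prod]; ring
    rw [hcard]
    field_simp
    linear_combination (4 - 2 * (d : ℂ) ^ 2) * ((d : ℂ) * (d : ℂ)⁻¹ + 1) * mul_inv_cancel₀ hdne
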